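/- Fix 0 < ρ ≤ 1 and define, for the AoI metric, the average age under threshold n by ā(n) = ([(n-1)² + (n-1)]ρ² + 2ρ(n-1) + 2)/(2ρ((n-1)ρ + 1)). Then ā(n) = Σ_{j=1}^{∞} j · u(j), where u(j) = ρ/(nρ+1-ρ) for 1 ≤ j ≤ n and u(j) = (1-ρ)^(j-n)·ρ/(nρ+1-ρ) for j > n. -/
import Mathlib

theorem stmt9 (ρ : ℝ) (hρ : 0 < ρ) (hρ1 : ρ ≤ 1) (n : ℕ) (hn : 1 ≤ n)
    (u : ℕ → ℝ)
    (hu0 : u 0 = 0)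
    (hu_low : ∀ j, 1 ≤ j → j ≤ n → u j = ρ / (n * ρ + 1 - ρ))
    (hu_high : ∀ j, n < j → u j = (1 - ρ) ^ (j - n) * ρ / (n * ρ + 1 - ρ)) :
    ((((n : ℝ) - 1) ^ 2 + ((n : ℝ) - 1)) * ρ ^ 2 + 2 * ρ * ((n : ℝ) - 1) + 2) /
        (2 * ρ * (((n : ℝ) - 1) * ρ + 1))
      = ∑' j : ℕ, (j : ℝ) * u j := by
  set q : ℝ := 1 - ρ with hqdef
  have hq0 : 0 ≤ q := by simp [hqdef]; linarith
  have hq1 : q < 1 := by simp [hqdef]; linarith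
  have hqn : ‖q‖ < 1 := by rw [Real.norm_eq_abs, abs_of_nonneg hq0]; exact hq1
  have hn1 : (1 : ℝ) ≤ (n : ℝ) := by exact_mod_cast hn
  have hD : (0:ℝ) < (n : ℝ) * ρ + 1 - ρ := by nlinarith
  set D : ℝ := (n : ℝ) * ρ + 1 - ρ with hDdef
  -- shifted function
  have hfshift : ∀ i : ℕ, ((i + (n+1) : ℕ) : ℝ) * u (i + (n+1))
      = ((i:ℝ) * q^i) * (q * ρ / D) + q^i * ((((n:ℝ)+1) * q * ρ) / D) := by
    intro i
    rw [hu_high _ (by omega)]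
    have h1 : i + (n+1) - n = i + 1 := by omega
    rw [h1]
    push_cast
    rw [pow_succ]
    ring
  have hs1 : Summable (fun i : ℕ => ((i:ℝ) * q^i) * (q * ρ / D)) :=
    ((summable_pow_mul_geometric_of_norm_lt_one 1 hqn).congr
      (fun i => by simp)).mul_right _
  have hs2 : Summable (fun i : ℕ => (q : ℝ)^i * ((((n:ℝ)+1) * q * ρ) / D)) :=
    (summable_geometric_of_norm_lt_one hqn).mul_right _
  have hsum_shift : Summable (fun i : ℕ => ((i + (n+1) : ℕ) : ℝ) * u (i + (n+1))) :=
    ((hs1.add hs2).congr (fun i => (hfshift i).symm))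
  have hsummable : Summable (fun j : ℕ => (j : ℝ) * u j) :=
    (summable_nat_add_iff (n+1)).mp hsum_shift
  have htail : ∑' i : ℕ, ((i + (n+1) : ℕ) : ℝ) * u (i + (n+1))
      = (q / (1-q)^2) * (q * ρ / D) + (1-q)⁻¹ * ((((n:ℝ)+1) * q * ρ) / D) := by
    rw [tsum_congr hfshift, Summable.tsum_add hs1 hs2, tsum_mul_right, tsum_mul_right,
      tsum_coe_mul_geometric_of_norm_lt_one hqn, tsum_geometric_of_lt_one hq0 hq1]
  have hsplit := Summable.sum_add_tsum_nat_add (n+1) hsummable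
  rw [← hsplit, htail]
  have hfin : ∑ j ∈ Finset.range (n+1), (j : ℝ) * u j
      = (ρ / D) * ((n:ℝ) * ((n:ℝ)+1) / 2) := by
    have : ∀ j ∈ Finset.range (n+1), (j : ℝ) * u j = (j : ℝ) * (ρ / D) := by
      intro j hj
      rcases Nat.eq_zero_or_pos j with h0 | h1
      · simp [h0, hu0]
      · rw [hu_low j h1 (by simpa using Nat.lt_succ_iff.mp (Finset.mem_range.mp hj))]
    rw [Finset.sum_congr rfl this, ← Finset.sum_mul]
    have hgauss : ∑ j ∈ Finset.range (n+1), (j : ℝ) = (n:ℝ) * ((n:ℝ)+1) / 2 := by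
      have h3 : (∑ j ∈ Finset.range (n+1), j) * 2 = (n+1) * n := by
        simpa using Finset.sum_range_id_mul_two (n+1)
      have h2 := congrArg (fun x : ℕ => (x : ℝ)) h3
      push_cast at h2
      linarith
    rw [hgauss]; ring
  rw [hfin]
  have h1q : (1 : ℝ) - q = ρ := by simp [hqdef]
  rw [h1q, hDdef]
  have hρ' : ρ ≠ 0 := ne_of_gt hρ
  have hD' : (n : ℝ) * ρ + 1 - ρ ≠ 0 := ne_of_gt hD
  have hD2 : ((n:ℝ) - 1) * ρ + 1 ≠ 0 := by
    intro h; apply hD'; rw [hDdef] at *; linarith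
  field_simp
  ring
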